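/- For t > 0, define g_c(t,y) = −J_0(√(t²−y²))/2 + ((t+y)/(2√(t²−y²))) I_1(√(t²−y²)) − (y²/(2 (t²−y²)^{3/2})) (I_1 + J_1)(√(t²−y²)) + (t²/(4(t²−y²))) (I_0 + I_2 + J_0 − J_2)(√(t²−y²)) on |y| < t. Then lim_{y↑t} g_c(t,y) = t/2 and lim_{y↓−t} g_c(t,y) = 0. -/

import Mathlib

open Real Filter


/-- Modified Bessel function of the first kind, order 0. -/
noncomputable def besselI0 (r : ℝ) : ℝ :=
  ∑' k : ℕ, (r / 2) ^ (2 * k) / ((Nat.factorial k : ℝ)) ^ 2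

/-- Bessel function of the first kind, order 0. -/
noncomputable def besselJ0 (r : ℝ) : ℝ :=
  ∑' k : ℕ, (-1 : ℝ) ^ k * (r / 2) ^ (2 * k) / ((Nat.factorial k : ℝ)) ^ 2

/-- Modified Bessel function of the first kind, order 1. -/
noncomputable def besselI1 (r : ℝ) : ℝ :=
  ∑' k : ℕ, (r / 2) ^ (2 * k + 1) / ((Nat.factorial k : ℝ) * (Nat.factorial (k + 1)))

/-- Bessel function of the first kind, order 1. -/
noncomputable def besselJ1 (r : ℝ) : ℝ :=
  ∑' k : ℕ, (-1 : ℝ) ^ k * (r / 2) ^ (2 * k + 1) / ((Nat.factorial k : ℝ) * (Nat.factorial (k + 1)))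

/-- Modified Bessel function of the first kind, order 2. -/
noncomputable def besselI2 (r : ℝ) : ℝ :=
  ∑' k : ℕ, (r / 2) ^ (2 * k + 2) / ((Nat.factorial k : ℝ) * (Nat.factorial (k + 2)))

/-- Bessel function of the first kind, order 2. -/
noncomputable def besselJ2 (r : ℝ) : ℝ :=
  ∑' k : ℕ, (-1 : ℝ) ^ k * (r / 2) ^ (2 * k + 2) / ((Nat.factorial k : ℝ) * (Nat.factorial (k + 2)))

/- ===== auxiliary lemmas ===== -/

section ErlangAux

lemma fact_one_le' (k : ℕ) : (1:ℝ) ≤ (Nat.factorial k : ℝ) :=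
  Nat.one_le_cast.mpr (Nat.factorial_pos k)

lemma summable_SS {C : ℝ} {a : ℕ → ℝ} (h : ∀ k, |a k| ≤ C / (Nat.factorial k : ℝ)) (u : ℝ) :
    Summable (fun k => a k * u ^ k) := by
  apply Summable.of_abs
  apply Summable.of_nonneg_of_le (fun k => abs_nonneg _) (fun k => ?_)
    ((Real.summable_pow_div_factorial |u|).mul_left C)
  rw [abs_mul, abs_pow]
  calc |a k| * |u| ^ k ≤ (C / (Nat.factorial k : ℝ)) * |u| ^ k := by
        exact mul_le_mul_of_nonneg_right (h k) (pow_nonneg (abs_nonneg u) k)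
    _ = C * (|u| ^ k / (Nat.factorial k : ℝ)) := by ring

lemma fact_inv_succ (C : ℝ) (hC : 0 ≤ C) (k : ℕ) :
    C / (Nat.factorial (k+1) : ℝ) ≤ C / (Nat.factorial k : ℝ) := by
  have h1 : (0:ℝ) < (Nat.factorial k : ℝ) := lt_of_lt_of_le one_pos (fact_one_le' k)
  have h1' : (0:ℝ) < (Nat.factorial (k+1) : ℝ) := lt_of_lt_of_le one_pos (fact_one_le' (k+1))
  have h2 : (Nat.factorial k : ℝ) ≤ (Nat.factorial (k+1) : ℝ) := by
    exact_mod_cast Nat.factorial_le (Nat.le_succ k)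
  rw [div_le_div_iff₀ h1' h1]
  exact mul_le_mul_of_nonneg_left h2 hC

lemma SS_shift {C : ℝ} {a : ℕ → ℝ} (h : ∀ k, |a k| ≤ C / (Nat.factorial k : ℝ)) (u : ℝ) :
    (∑' k : ℕ, a k * u ^ k) = a 0 + u * ∑' k : ℕ, a (k+1) * u ^ k := by
  rw [Summable.tsum_eq_zero_add (summable_SS h u)]
  simp only [pow_zero, mul_one]
  congr 1
  rw [← tsum_mul_left]
  exact tsum_congr fun k => by ring

set_option maxHeartbeats 1000000 in
lemma tendsto_SS {C : ℝ} {a : ℕ → ℝ} (h : ∀ k, |a k| ≤ C / (Nat.factorial k : ℝ)) :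
    Filter.Tendsto (fun u : ℝ => ∑' k : ℕ, a k * u ^ k) (nhds 0) (nhds (a 0)) := by
  have hC : 0 ≤ C := by
    have h0 := h 0
    simp only [Nat.factorial_zero, Nat.cast_one, div_one] at h0
    exact le_trans (abs_nonneg _) h0
  have h' : ∀ k, |a (k+1)| ≤ C / (Nat.factorial k : ℝ) :=
    fun k => le_trans (h (k+1)) (fact_inv_succ C hC k)
  have hMs : Summable (fun k : ℕ => C / (Nat.factorial k : ℝ)) := by
    have := (Real.summable_pow_div_factorial 1).mul_left C
    simpa [div_eq_mul_inv] using this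
  set M := ∑' k : ℕ, C / (Nat.factorial k : ℝ) with hM
  have key : ∀ u : ℝ, |u| ≤ 1 → |(∑' k : ℕ, a k * u ^ k) - a 0| ≤ M * |u| := by
    intro u hu1
    rw [SS_shift h u]
    have hs : Summable (fun k : ℕ => a (k+1) * u ^ k) := summable_SS h' u
    have hb : |∑' k : ℕ, a (k+1) * u ^ k| ≤ M := by
      have habs : Summable (fun k : ℕ => |a (k+1)| * |u| ^ k) := by
        have := hs.abs
        simpa [abs_mul, abs_pow] using this
      have h1 : |∑' k : ℕ, a (k+1) * u ^ k| ≤ ∑' k : ℕ, |a (k+1)| * |u| ^ k := by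
        have := norm_tsum_le_tsum_norm (f := fun k : ℕ => a (k+1) * u ^ k)
          (by simpa [Real.norm_eq_abs, abs_mul, abs_pow] using habs)
        simpa [Real.norm_eq_abs, abs_mul, abs_pow] using this
      refine h1.trans (habs.tsum_le_tsum (fun k => ?_) hMs)
      calc |a (k+1)| * |u| ^ k ≤ (C / (Nat.factorial k : ℝ)) * 1 := by
            apply mul_le_mul (h' k) (pow_le_one₀ (abs_nonneg u) hu1)
              (pow_nonneg (abs_nonneg u) k)
            positivity
        _ = C / (Nat.factorial k : ℝ) := mul_one _
    calc |a 0 + u * (∑' k : ℕ, a (k+1) * u ^ k) - a 0|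
        = |u| * |∑' k : ℕ, a (k+1) * u ^ k| := by rw [add_sub_cancel_left, abs_mul]
      _ ≤ |u| * M := mul_le_mul_of_nonneg_left hb (abs_nonneg u)
      _ = M * |u| := mul_comm _ _
  have hev : ∀ᶠ u in nhds (0:ℝ), |(∑' k : ℕ, a k * u ^ k) - a 0| ≤ M * |u| := by
    have h1 : ∀ᶠ u in nhds (0:ℝ), |u| ≤ 1 := by
      filter_upwards [Metric.ball_mem_nhds (0:ℝ) one_pos] with u hu
      rw [Metric.mem_ball, Real.dist_eq, sub_zero] at hu
      exact hu.le
    filter_upwards [h1] with u hu using key u hu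
  have hlim : Filter.Tendsto (fun u : ℝ => M * |u|) (nhds 0) (nhds 0) := by
    have hc : Continuous (fun u : ℝ => M * |u|) := continuous_const.mul continuous_abs
    have := hc.tendsto (0:ℝ)
    simpa using this
  have h0 : Filter.Tendsto (fun u : ℝ => (∑' k : ℕ, a k * u ^ k) - a 0) (nhds 0) (nhds 0) :=
    squeeze_zero_norm' (by simpa [Real.norm_eq_abs] using hev) hlim
  have := h0.add_const (a 0)
  simpa using this

end ErlangAux


noncomputable def cJ0 (k : ℕ) : ℝ := (-1)^k / (4^k * (Nat.factorial k : ℝ)^2)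
noncomputable def cI0 (k : ℕ) : ℝ := 1 / (4^k * (Nat.factorial k : ℝ)^2)
noncomputable def cI1 (k : ℕ) : ℝ := 1 / (4^k * 2 * (Nat.factorial k : ℝ) * (Nat.factorial (k+1) : ℝ))
noncomputable def cJ1 (k : ℕ) : ℝ := (-1)^k / (4^k * 2 * (Nat.factorial k : ℝ) * (Nat.factorial (k+1) : ℝ))
noncomputable def cI2 (k : ℕ) : ℝ := 1 / (4^(k+1) * (Nat.factorial k : ℝ) * (Nat.factorial (k+2) : ℝ))
noncomputable def cJ2 (k : ℕ) : ℝ := (-1)^k / (4^(k+1) * (Nat.factorial k : ℝ) * (Nat.factorial (k+2) : ℝ))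

lemma four_pow_one_le (k : ℕ) : (1:ℝ) ≤ 4^k := one_le_pow₀ (by norm_num)

lemma bJ0 (k : ℕ) : |cJ0 k| ≤ 1 / (Nat.factorial k : ℝ) := by
  have hf := fact_one_le' k; have h4 := four_pow_one_le k
  rw [cJ0, abs_div, abs_pow, abs_neg, abs_one, one_pow,
    abs_of_pos (by positivity : (0:ℝ) < 4^k * (Nat.factorial k : ℝ)^2)]
  exact one_div_le_one_div_of_le (by positivity) (by nlinarith)

lemma bI0 (k : ℕ) : |cI0 k| ≤ 1 / (Nat.factorial k : ℝ) := by
  have hf := fact_one_le' k; have h4 := four_pow_one_le k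
  rw [cI0, abs_div, abs_one,
    abs_of_pos (by positivity : (0:ℝ) < 4^k * (Nat.factorial k : ℝ)^2)]
  exact one_div_le_one_div_of_le (by positivity) (by nlinarith)

lemma bI1 (k : ℕ) : |cI1 k| ≤ 1 / (Nat.factorial k : ℝ) := by
  have hf := fact_one_le' k; have hf1 := fact_one_le' (k+1); have h4 := four_pow_one_le k
  rw [cI1, abs_div, abs_one,
    abs_of_pos (by positivity : (0:ℝ) < 4^k * 2 * (Nat.factorial k : ℝ) * (Nat.factorial (k+1) : ℝ))]
  have key : (1:ℝ) ≤ 4^k * 2 * (Nat.factorial (k+1) : ℝ) := by nlinarith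
  have := mul_le_mul_of_nonneg_right key (le_trans zero_le_one hf)
  exact one_div_le_one_div_of_le (by positivity) (by nlinarith)

lemma bJ1 (k : ℕ) : |cJ1 k| ≤ 1 / (Nat.factorial k : ℝ) := by
  have hf := fact_one_le' k; have hf1 := fact_one_le' (k+1); have h4 := four_pow_one_le k
  rw [cJ1, abs_div, abs_pow, abs_neg, abs_one, one_pow,
    abs_of_pos (by positivity : (0:ℝ) < 4^k * 2 * (Nat.factorial k : ℝ) * (Nat.factorial (k+1) : ℝ))]
  have key : (1:ℝ) ≤ 4^k * 2 * (Nat.factorial (k+1) : ℝ) := by nlinarith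
  have := mul_le_mul_of_nonneg_right key (le_trans zero_le_one hf)
  exact one_div_le_one_div_of_le (by positivity) (by nlinarith)

lemma bI2 (k : ℕ) : |cI2 k| ≤ 1 / (Nat.factorial k : ℝ) := by
  have hf := fact_one_le' k; have hf2 := fact_one_le' (k+2); have h4 := four_pow_one_le (k+1)
  rw [cI2, abs_div, abs_one,
    abs_of_pos (by positivity : (0:ℝ) < 4^(k+1) * (Nat.factorial k : ℝ) * (Nat.factorial (k+2) : ℝ))]
  have key : (1:ℝ) ≤ 4^(k+1) * (Nat.factorial (k+2) : ℝ) := by nlinarith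
  have := mul_le_mul_of_nonneg_right key (le_trans zero_le_one hf)
  exact one_div_le_one_div_of_le (by positivity) (by nlinarith)

lemma bJ2 (k : ℕ) : |cJ2 k| ≤ 1 / (Nat.factorial k : ℝ) := by
  have hf := fact_one_le' k; have hf2 := fact_one_le' (k+2); have h4 := four_pow_one_le (k+1)
  rw [cJ2, abs_div, abs_pow, abs_neg, abs_one, one_pow,
    abs_of_pos (by positivity : (0:ℝ) < 4^(k+1) * (Nat.factorial k : ℝ) * (Nat.factorial (k+2) : ℝ))]
  have key : (1:ℝ) ≤ 4^(k+1) * (Nat.factorial (k+2) : ℝ) := by nlinarith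
  have := mul_le_mul_of_nonneg_right key (le_trans zero_le_one hf)
  exact one_div_le_one_div_of_le (by positivity) (by nlinarith)


lemma sqrt_half_sq {u : ℝ} (hu : 0 ≤ u) : (Real.sqrt u / 2) ^ 2 = u / 4 := by
  rw [div_pow, Real.sq_sqrt hu]; norm_num

lemma sqrt_half_pow_even {u : ℝ} (hu : 0 ≤ u) (k : ℕ) :
    (Real.sqrt u / 2) ^ (2 * k) = u ^ k / 4 ^ k := by
  rw [pow_mul, sqrt_half_sq hu, div_pow]

lemma besselJ0_sqrt {u : ℝ} (hu : 0 ≤ u) : besselJ0 (Real.sqrt u) = ∑' k : ℕ, cJ0 k * u ^ k := by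
  refine tsum_congr fun k => ?_
  rw [sqrt_half_pow_even hu, cJ0]; ring

lemma besselI0_sqrt {u : ℝ} (hu : 0 ≤ u) : besselI0 (Real.sqrt u) = ∑' k : ℕ, cI0 k * u ^ k := by
  refine tsum_congr fun k => ?_
  rw [sqrt_half_pow_even hu, cI0]; ring

lemma besselI1_sqrt {u : ℝ} (hu : 0 ≤ u) :
    besselI1 (Real.sqrt u) = Real.sqrt u * ∑' k : ℕ, cI1 k * u ^ k := by
  rw [besselI1, ← tsum_mul_left]
  refine tsum_congr fun k => ?_
  rw [pow_succ, sqrt_half_pow_even hu, cI1]; ring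

lemma besselJ1_sqrt {u : ℝ} (hu : 0 ≤ u) :
    besselJ1 (Real.sqrt u) = Real.sqrt u * ∑' k : ℕ, cJ1 k * u ^ k := by
  rw [besselJ1, ← tsum_mul_left]
  refine tsum_congr fun k => ?_
  rw [pow_succ, sqrt_half_pow_even hu, cJ1]; ring

lemma besselI2_sqrt {u : ℝ} (hu : 0 ≤ u) :
    besselI2 (Real.sqrt u) = u * ∑' k : ℕ, cI2 k * u ^ k := by
  rw [besselI2, ← tsum_mul_left]
  refine tsum_congr fun k => ?_
  rw [show 2 * k + 2 = 2 * (k + 1) by ring, sqrt_half_pow_even hu, cI2]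
  rw [pow_succ, pow_succ]; ring

lemma besselJ2_sqrt {u : ℝ} (hu : 0 ≤ u) :
    besselJ2 (Real.sqrt u) = u * ∑' k : ℕ, cJ2 k * u ^ k := by
  rw [besselJ2, ← tsum_mul_left]
  refine tsum_congr fun k => ?_
  rw [show 2 * k + 2 = 2 * (k + 1) by ring, sqrt_half_pow_even hu, cJ2]
  rw [pow_succ, pow_succ]; ring

lemma bT (k : ℕ) : |cI1 k + cJ1 k| ≤ 2 / (Nat.factorial k : ℝ) := by
  calc |cI1 k + cJ1 k| ≤ |cI1 k| + |cJ1 k| := abs_add_le _ _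
    _ ≤ 1 / (Nat.factorial k : ℝ) + 1 / (Nat.factorial k : ℝ) := add_le_add (bI1 k) (bJ1 k)
    _ = 2 / (Nat.factorial k : ℝ) := by ring

lemma bTs (k : ℕ) : |cI1 (k+1) + cJ1 (k+1)| ≤ 2 / (Nat.factorial k : ℝ) :=
  le_trans (bT (k+1)) (fact_inv_succ 2 (by norm_num) k)

lemma bW (k : ℕ) : |cI0 k + cJ0 k| ≤ 2 / (Nat.factorial k : ℝ) := by
  calc |cI0 k + cJ0 k| ≤ |cI0 k| + |cJ0 k| := abs_add_le _ _
    _ ≤ 1 / (Nat.factorial k : ℝ) + 1 / (Nat.factorial k : ℝ) := add_le_add (bI0 k) (bJ0 k)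
    _ = 2 / (Nat.factorial k : ℝ) := by ring

lemma bWs (k : ℕ) : |cI0 (k+1) + cJ0 (k+1)| ≤ 2 / (Nat.factorial k : ℝ) :=
  le_trans (bW (k+1)) (fact_inv_succ 2 (by norm_num) k)

lemma bV (k : ℕ) : |cI2 k - cJ2 k| ≤ 2 / (Nat.factorial k : ℝ) := by
  calc |cI2 k - cJ2 k| ≤ |cI2 k| + |cJ2 k| := abs_sub _ _
    _ ≤ 1 / (Nat.factorial k : ℝ) + 1 / (Nat.factorial k : ℝ) := add_le_add (bI2 k) (bJ2 k)
    _ = 2 / (Nat.factorial k : ℝ) := by ring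

lemma bA (k : ℕ) : |cI0 (k+1) + cJ0 (k+1) + (cI2 k - cJ2 k)| ≤ 4 / (Nat.factorial k : ℝ) := by
  calc |cI0 (k+1) + cJ0 (k+1) + (cI2 k - cJ2 k)|
      ≤ |cI0 (k+1) + cJ0 (k+1)| + |cI2 k - cJ2 k| := abs_add_le _ _
    _ ≤ 2 / (Nat.factorial k : ℝ) + 2 / (Nat.factorial k : ℝ) := add_le_add (bWs k) (bV k)
    _ = 4 / (Nat.factorial k : ℝ) := by ring

lemma vI1J1_zero : cI1 0 + cJ1 0 = 1 := by
  simp [cI1, cJ1, Nat.factorial]; norm_num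

lemma vI0J0_zero : cI0 0 + cJ0 0 = 2 := by
  simp [cI0, cJ0, Nat.factorial]; norm_num

lemma vJ0_zero : cJ0 0 = 1 := by simp [cJ0, Nat.factorial]

lemma vI1_zero : cI1 0 = 1/2 := by norm_num [cI1, Nat.factorial]

lemma vT1 : cI1 1 + cJ1 1 = 0 := by
  norm_num [cI1, cJ1, Nat.factorial]

lemma vA0 : cI0 1 + cJ0 1 + (cI2 0 - cJ2 0) = 0 := by
  norm_num [cI0, cJ0, cI2, cJ2, Nat.factorial]
set_option maxHeartbeats 1000000 in
lemma gc_eq (t y : ℝ) (hy1 : -t < y) (hy2 : y < t) :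
    -besselJ0 (Real.sqrt (t ^ 2 - y ^ 2)) / 2 +
        (t + y) / (2 * Real.sqrt (t ^ 2 - y ^ 2)) * besselI1 (Real.sqrt (t ^ 2 - y ^ 2)) -
        y ^ 2 / (2 * (t ^ 2 - y ^ 2) ^ ((3 : ℝ) / 2)) *
          (besselI1 (Real.sqrt (t ^ 2 - y ^ 2)) + besselJ1 (Real.sqrt (t ^ 2 - y ^ 2))) +
        t ^ 2 / (4 * (t ^ 2 - y ^ 2)) *
          (besselI0 (Real.sqrt (t ^ 2 - y ^ 2)) + besselI2 (Real.sqrt (t ^ 2 - y ^ 2)) +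
            besselJ0 (Real.sqrt (t ^ 2 - y ^ 2)) - besselJ2 (Real.sqrt (t ^ 2 - y ^ 2)))
    = -(∑' k : ℕ, cJ0 k * (t ^ 2 - y ^ 2) ^ k) / 2
        + (t + y) / 2 * (∑' k : ℕ, cI1 k * (t ^ 2 - y ^ 2) ^ k) + 1 / 2
        - y ^ 2 / 2 * (∑' k : ℕ, (cI1 (k+1) + cJ1 (k+1)) * (t ^ 2 - y ^ 2) ^ k)
        + t ^ 2 / 4 * (∑' k : ℕ, (cI0 (k+1) + cJ0 (k+1) + (cI2 k - cJ2 k)) * (t ^ 2 - y ^ 2) ^ k) := by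
  set u := t ^ 2 - y ^ 2 with hu_def
  have hu : 0 < u := by nlinarith
  have hru : (0:ℝ) < Real.sqrt u := Real.sqrt_pos.mpr hu
  have hrne : Real.sqrt u ≠ 0 := hru.ne'
  have hune : u ≠ 0 := hu.ne'
  have h32 : u ^ ((3:ℝ)/2) = u * Real.sqrt u := by
    rw [show (3:ℝ)/2 = 1 + 1/2 by norm_num, Real.rpow_add hu, Real.rpow_one,
      ← Real.sqrt_eq_rpow]
  rw [besselJ0_sqrt hu.le, besselI0_sqrt hu.le, besselI1_sqrt hu.le, besselJ1_sqrt hu.le,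
    besselI2_sqrt hu.le, besselJ2_sqrt hu.le, h32]
  set A := ∑' k : ℕ, cJ0 k * u ^ k with hA
  set I0s := ∑' k : ℕ, cI0 k * u ^ k with hI0s
  set B := ∑' k : ℕ, cI1 k * u ^ k with hB
  set B' := ∑' k : ℕ, cJ1 k * u ^ k with hB'
  set I2s := ∑' k : ℕ, cI2 k * u ^ k with hI2s
  set J2s := ∑' k : ℕ, cJ2 k * u ^ k with hJ2s
  set Tt := ∑' k : ℕ, (cI1 (k+1) + cJ1 (k+1)) * u ^ k with hTt
  set Ww := ∑' k : ℕ, (cI0 (k+1) + cJ0 (k+1)) * u ^ k with hWw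
  -- combination identities
  have hBB : B + B' = 1 + u * Tt := by
    rw [hB, hB', ← Summable.tsum_add (summable_SS bI1 u) (summable_SS bJ1 u)]
    have h1 : (∑' k : ℕ, (cI1 k * u ^ k + cJ1 k * u ^ k))
        = ∑' k : ℕ, (cI1 k + cJ1 k) * u ^ k := tsum_congr fun k => by ring
    rw [h1, SS_shift bT u, vI1J1_zero]
  have hW : I0s + A = 2 + u * Ww := by
    rw [hI0s, hA, ← Summable.tsum_add (summable_SS bI0 u) (summable_SS bJ0 u)]
    have h1 : (∑' k : ℕ, (cI0 k * u ^ k + cJ0 k * u ^ k))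
        = ∑' k : ℕ, (cI0 k + cJ0 k) * u ^ k := tsum_congr fun k => by ring
    rw [h1, SS_shift bW u, vI0J0_zero]
  have hsplit : (∑' k : ℕ, (cI0 (k+1) + cJ0 (k+1) + (cI2 k - cJ2 k)) * u ^ k)
      = Ww + (I2s - J2s) := by
    have h1 : ∀ k : ℕ, (cI0 (k+1) + cJ0 (k+1) + (cI2 k - cJ2 k)) * u ^ k
        = (cI0 (k+1) + cJ0 (k+1)) * u ^ k + ((cI2 k - cJ2 k) * u ^ k) := fun k => by ring
    rw [tsum_congr h1, Summable.tsum_add (summable_SS bWs u) (summable_SS bV u)]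
    congr 1
    rw [hI2s, hJ2s, ← Summable.tsum_sub (summable_SS bI2 u) (summable_SS bJ2 u)]
    exact tsum_congr fun k => by ring
  rw [hsplit]
  -- now pure algebra
  have e2 : (t + y) / (2 * Real.sqrt u) * (Real.sqrt u * B) = (t + y) / 2 * B := by
    field_simp
  have e3 : y ^ 2 / (2 * (u * Real.sqrt u)) * (Real.sqrt u * B + Real.sqrt u * B')
      = y ^ 2 / (2 * u) * (B + B') := by
    rw [show Real.sqrt u * B + Real.sqrt u * B' = Real.sqrt u * (B + B') by ring]
    field_simp
  have e4 : t ^ 2 / (4 * u) * (I0s + u * I2s + A - u * J2s)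
      = t ^ 2 / (4 * u) * (2 + u * Ww + u * (I2s - J2s)) := by
    have : I0s + u * I2s + A - u * J2s = (I0s + A) + u * (I2s - J2s) := by ring
    rw [this, hW]
  have ht2 : t ^ 2 = u + y ^ 2 := by rw [hu_def]; ring
  have e6 : -(y ^ 2 / (2 * u) * (1 + u * Tt)) + t ^ 2 / (4 * u) * (2 + u * Ww + u * (I2s - J2s))
      = 1 / 2 - y ^ 2 / 2 * Tt + t ^ 2 / 4 * (Ww + (I2s - J2s)) := by
    rw [ht2]
    field_simp
    ring
  rw [e2, e3, hBB, e4]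
  linear_combination e6
lemma tendsto_nice (t y₀ : ℝ) (hsq : t ^ 2 - y₀ ^ 2 = 0) :
    Filter.Tendsto (fun y : ℝ =>
      -(∑' k : ℕ, cJ0 k * (t ^ 2 - y ^ 2) ^ k) / 2
        + (t + y) / 2 * (∑' k : ℕ, cI1 k * (t ^ 2 - y ^ 2) ^ k) + 1 / 2
        - y ^ 2 / 2 * (∑' k : ℕ, (cI1 (k+1) + cJ1 (k+1)) * (t ^ 2 - y ^ 2) ^ k)
        + t ^ 2 / 4 * (∑' k : ℕ, (cI0 (k+1) + cJ0 (k+1) + (cI2 k - cJ2 k)) * (t ^ 2 - y ^ 2) ^ k))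
      (nhds y₀) (nhds ((t + y₀) / 4)) := by
  have hu : Filter.Tendsto (fun y : ℝ => t ^ 2 - y ^ 2) (nhds y₀) (nhds 0) := by
    have hc : Continuous (fun y : ℝ => t ^ 2 - y ^ 2) := by continuity
    have := hc.tendsto y₀
    rwa [hsq] at this
  have h1 : Filter.Tendsto (fun y : ℝ => ∑' k : ℕ, cJ0 k * (t ^ 2 - y ^ 2) ^ k)
      (nhds y₀) (nhds 1) := by
    have := (tendsto_SS bJ0).comp hu
    rw [vJ0_zero] at this
    exact this
  have h2 : Filter.Tendsto (fun y : ℝ => ∑' k : ℕ, cI1 k * (t ^ 2 - y ^ 2) ^ k)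
      (nhds y₀) (nhds (1/2)) := by
    have := (tendsto_SS bI1).comp hu
    rw [vI1_zero] at this
    exact this
  have h3 : Filter.Tendsto (fun y : ℝ => ∑' k : ℕ, (cI1 (k+1) + cJ1 (k+1)) * (t ^ 2 - y ^ 2) ^ k)
      (nhds y₀) (nhds 0) := by
    have := (tendsto_SS bTs).comp hu
    rw [vT1] at this
    exact this
  have h4 : Filter.Tendsto
      (fun y : ℝ => ∑' k : ℕ, (cI0 (k+1) + cJ0 (k+1) + (cI2 k - cJ2 k)) * (t ^ 2 - y ^ 2) ^ k)
      (nhds y₀) (nhds 0) := by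
    have := (tendsto_SS bA).comp hu
    rw [vA0] at this
    exact this
  have hy : Filter.Tendsto (fun y : ℝ => y) (nhds y₀) (nhds y₀) := tendsto_id
  have H := ((((h1.neg.div_const 2).add
      ((((tendsto_const_nhds (x := t)).add hy).div_const 2).mul h2)).add
      (tendsto_const_nhds (x := (1:ℝ)/2))).sub
      (((hy.pow 2).div_const 2).mul h3)).add
      ((tendsto_const_nhds (x := t^2/4)).mul h4)
  have hval : (t + y₀) / 4 = -1 / 2 + (t + y₀) / 2 * (1/2) + 1/2 - y₀ ^ 2 / 2 * 0 + t^2/4 * 0 := by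
    ring
  rw [hval]
  convert H using 2
/-- Boundary limits of the continuous part of the 2-Erlang telegraph density:
`lim_{y↑t} g_c(t,y) = t/2` and `lim_{y↓−t} g_c(t,y) = 0`. -/
theorem erlang2_gc_boundary (t : ℝ) (ht : 0 < t) :
    Filter.Tendsto (fun y : ℝ =>
      -besselJ0 (Real.sqrt (t ^ 2 - y ^ 2)) / 2 +
        (t + y) / (2 * Real.sqrt (t ^ 2 - y ^ 2)) * besselI1 (Real.sqrt (t ^ 2 - y ^ 2)) -
        y ^ 2 / (2 * (t ^ 2 - y ^ 2) ^ ((3 : ℝ) / 2)) *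
          (besselI1 (Real.sqrt (t ^ 2 - y ^ 2)) + besselJ1 (Real.sqrt (t ^ 2 - y ^ 2))) +
        t ^ 2 / (4 * (t ^ 2 - y ^ 2)) *
          (besselI0 (Real.sqrt (t ^ 2 - y ^ 2)) + besselI2 (Real.sqrt (t ^ 2 - y ^ 2)) +
            besselJ0 (Real.sqrt (t ^ 2 - y ^ 2)) - besselJ2 (Real.sqrt (t ^ 2 - y ^ 2))))
      (nhdsWithin t (Set.Iio t)) (nhds (t / 2)) ∧
    Filter.Tendsto (fun y : ℝ =>
      -besselJ0 (Real.sqrt (t ^ 2 - y ^ 2)) / 2 +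
        (t + y) / (2 * Real.sqrt (t ^ 2 - y ^ 2)) * besselI1 (Real.sqrt (t ^ 2 - y ^ 2)) -
        y ^ 2 / (2 * (t ^ 2 - y ^ 2) ^ ((3 : ℝ) / 2)) *
          (besselI1 (Real.sqrt (t ^ 2 - y ^ 2)) + besselJ1 (Real.sqrt (t ^ 2 - y ^ 2))) +
        t ^ 2 / (4 * (t ^ 2 - y ^ 2)) *
          (besselI0 (Real.sqrt (t ^ 2 - y ^ 2)) + besselI2 (Real.sqrt (t ^ 2 - y ^ 2)) +
            besselJ0 (Real.sqrt (t ^ 2 - y ^ 2)) - besselJ2 (Real.sqrt (t ^ 2 - y ^ 2))))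
      (nhdsWithin (-t) (Set.Ioi (-t))) (nhds 0) := by
  have hthm : ∀ y₀ : ℝ, t ^ 2 - y₀ ^ 2 = 0 → ∀ l : Filter ℝ,
      (∀ᶠ y in l, y ∈ Set.Ioo (-t) t) → l ≤ nhds y₀ →
      Filter.Tendsto (fun y : ℝ =>
        -besselJ0 (Real.sqrt (t ^ 2 - y ^ 2)) / 2 +
          (t + y) / (2 * Real.sqrt (t ^ 2 - y ^ 2)) * besselI1 (Real.sqrt (t ^ 2 - y ^ 2)) -
          y ^ 2 / (2 * (t ^ 2 - y ^ 2) ^ ((3 : ℝ) / 2)) *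
            (besselI1 (Real.sqrt (t ^ 2 - y ^ 2)) + besselJ1 (Real.sqrt (t ^ 2 - y ^ 2))) +
          t ^ 2 / (4 * (t ^ 2 - y ^ 2)) *
            (besselI0 (Real.sqrt (t ^ 2 - y ^ 2)) + besselI2 (Real.sqrt (t ^ 2 - y ^ 2)) +
              besselJ0 (Real.sqrt (t ^ 2 - y ^ 2)) - besselJ2 (Real.sqrt (t ^ 2 - y ^ 2))))
        l (nhds ((t + y₀) / 4)) := by
    intro y₀ hy₀ l hev hle
    have hnice := (tendsto_nice t y₀ hy₀).mono_left hle
    refine hnice.congr' ?_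
    filter_upwards [hev] with y hy
    exact (gc_eq t y hy.1 hy.2).symm
  constructor
  · have hev : ∀ᶠ y in nhdsWithin t (Set.Iio t), y ∈ Set.Ioo (-t) t := by
      have hmem : Set.Ioo (-t) t ∈ nhdsWithin t (Set.Iio t) :=
        Ioo_mem_nhdsLT_of_mem ⟨by linarith, le_rfl⟩
      exact Filter.eventually_of_mem hmem fun y hy => hy
    have h := hthm t (by ring) _ hev nhdsWithin_le_nhds
    have : (t + t) / 4 = t / 2 := by ring
    rwa [this] at h
  · have hev : ∀ᶠ y in nhdsWithin (-t) (Set.Ioi (-t)), y ∈ Set.Ioo (-t) t := by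
      have hmem : Set.Ioo (-t) t ∈ nhdsWithin (-t) (Set.Ioi (-t)) :=
        Ioo_mem_nhdsGT_of_mem ⟨le_rfl, by linarith⟩
      exact Filter.eventually_of_mem hmem fun y hy => hy
    have h := hthm (-t) (by ring) _ hev nhdsWithin_le_nhds
    have : (t + -t) / 4 = 0 := by ring
    rwa [this] at h
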